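/- Let g be a nilpotent Lie algebra of real dimension 2n with nilpotent complex structure J given by a co-frame φ¹,…,φⁿ with dφⁱ ∈ Λ²⟨φ¹,…,φ^{i−1},φ̄¹,…,φ̄^{i−1}⟩, dφⁱ = 0 for i ≤ k, and dφ^{k+1} ≠ 0. Suppose the (1,1)-part of dφ^{k+1} vanishes, so ∂φ^{k+1} = Σ_{l<m≤k} A_{lm} φˡ∧φᵐ ≠ 0, with A_{ij} ≠ 0 for some i < j ≤ k. Then η := φ¹∧⋯∧(omit φⁱ)∧⋯∧(omit φʲ)∧⋯∧φ^{k+1}∧φ̄¹∧⋯∧φ̄ᵏ satisfies dη = ±A_{ij}·φ¹∧⋯∧φᵏ∧φ̄¹∧⋯∧φ̄ᵏ. -/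

import Mathlib

noncomputable section

abbrev Vsp : Type := (ℕ ⊕ ℕ) →₀ ℂ
abbrev ExtA : Type := ExteriorAlgebra ℂ Vsp

def φ (j : ℕ) : ExtA := ExteriorAlgebra.ι ℂ (Finsupp.single (Sum.inl j) 1)
def φb (j : ℕ) : ExtA := ExteriorAlgebra.ι ℂ (Finsupp.single (Sum.inr j) 1)

/-- the list [1, …, m] -/
def idx (m : ℕ) : List ℕ := (List.range m).map (· + 1)

namespace Stmt14Aux

open ExteriorAlgebra

def prodι (L : List Vsp) : ExtA := (L.map (ExteriorAlgebra.ι ℂ)).prod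

@[simp] lemma prodι_nil : prodι [] = 1 := rfl
@[simp] lemma prodι_cons (v : Vsp) (L : List Vsp) :
    prodι (v :: L) = ExteriorAlgebra.ι ℂ v * prodι L := by
  simp [prodι]

lemma prodι_append (L M : List Vsp) : prodι (L ++ M) = prodι L * prodι M := by
  simp [prodι]

lemma ι_anticomm (a b : Vsp) :
    ExteriorAlgebra.ι ℂ a * ExteriorAlgebra.ι ℂ b
      = -(ExteriorAlgebra.ι ℂ b * ExteriorAlgebra.ι ℂ a) :=
  eq_neg_of_add_eq_zero_left (ExteriorAlgebra.ι_add_mul_swap a b)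

lemma ι_mul_prodι_eq_zero {a : Vsp} {L : List Vsp} (h : a ∈ L) :
    ExteriorAlgebra.ι ℂ a * prodι L = 0 := by
  induction L with
  | nil => simp at h
  | cons b L ih =>
    rcases List.mem_cons.mp h with rfl | h
    · rw [prodι_cons, ← mul_assoc, ExteriorAlgebra.ι_sq_zero, zero_mul]
    · rw [prodι_cons, ← mul_assoc, ι_anticomm, neg_mul, mul_assoc, ih h,
        mul_zero, neg_zero]

lemma prodι_eq_zero_of_duplicate {a : Vsp} {L : List Vsp} (h : List.Duplicate a L) :
    prodι L = 0 := by
  induction h with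
  | cons_mem hm => rw [prodι_cons, ι_mul_prodι_eq_zero hm]
  | cons_duplicate _ ih => rw [prodι_cons, ih, mul_zero]

lemma prodι_eq_zero_of_not_nodup {L : List Vsp} (h : ¬ L.Nodup) :
    prodι L = 0 := by
  obtain ⟨a, ha⟩ := List.exists_duplicate_iff_not_nodup.mpr h
  exact prodι_eq_zero_of_duplicate ha

lemma prodι_perm {L M : List Vsp} (h : L.Perm M) :
    ∃ ε : ℂ, (ε = 1 ∨ ε = -1) ∧ prodι L = ε • prodι M := by
  induction h with
  | nil => exact ⟨1, Or.inl rfl, by simp⟩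
  | cons x _ ih =>
    obtain ⟨ε, hε, he⟩ := ih
    exact ⟨ε, hε, by rw [prodι_cons, prodι_cons, he, mul_smul_comm]⟩
  | swap x y L =>
    refine ⟨-1, Or.inr rfl, ?_⟩
    rw [prodι_cons, prodι_cons, prodι_cons, prodι_cons, ← mul_assoc, ← mul_assoc,
      ι_anticomm]
    simp
  | trans _ _ ih1 ih2 =>
    obtain ⟨ε1, hε1, he1⟩ := ih1
    obtain ⟨ε2, hε2, he2⟩ := ih2
    refine ⟨ε1 * ε2, ?_, by rw [he1, he2, smul_smul]⟩
    rcases hε1 with rfl | rfl <;> rcases hε2 with rfl | rfl <;> simp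

lemma d_prodι_mul (d : ExtA →ₗ[ℂ] ExtA)
    (hleib : ∀ (v : Vsp) (y : ExtA),
      d (ExteriorAlgebra.ι ℂ v * y)
        = d (ExteriorAlgebra.ι ℂ v) * y - ExteriorAlgebra.ι ℂ v * d y)
    (L : List Vsp) (hL : ∀ v ∈ L, d (ExteriorAlgebra.ι ℂ v) = 0) (y : ExtA) :
    d (prodι L * y) = ((-1 : ℂ) ^ L.length) • (prodι L * d y) := by
  induction L with
  | nil => simp
  | cons v L ih =>
    rw [prodι_cons, mul_assoc, hleib, hL v List.mem_cons_self, zero_mul,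
      ih (fun w hw => hL w (List.mem_cons_of_mem _ hw)), zero_sub, List.length_cons,
      pow_succ, mul_comm ((-1:ℂ)^L.length), mul_smul, neg_one_smul, mul_smul_comm,
      mul_assoc]

lemma d_prodι_closed (d : ExtA →ₗ[ℂ] ExtA)
    (hleib : ∀ (v : Vsp) (y : ExtA),
      d (ExteriorAlgebra.ι ℂ v * y)
        = d (ExteriorAlgebra.ι ℂ v) * y - ExteriorAlgebra.ι ℂ v * d y)
    (L : List Vsp) (hne : L ≠ []) (hL : ∀ v ∈ L, d (ExteriorAlgebra.ι ℂ v) = 0) :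
    d (prodι L) = 0 := by
  induction L with
  | nil => exact absurd rfl hne
  | cons v L ih =>
    rcases L with _ | ⟨w, L⟩
    · simpa using hL v (by simp)
    · rw [prodι_cons, hleib, hL v (by simp), zero_mul, ih (by simp)
        (fun w hw => hL w (List.mem_cons_of_mem _ hw)), mul_zero, zero_sub, neg_zero]

lemma mem_idx {m l : ℕ} : l ∈ idx m ↔ 1 ≤ l ∧ l ≤ m := by
  simp only [idx, List.mem_map, List.mem_range]
  constructor
  · rintro ⟨a, ha, rfl⟩; omega
  · rintro ⟨h1, h2⟩; exact ⟨l - 1, by omega, by omega⟩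

lemma nodup_idx (m : ℕ) : (idx m).Nodup :=
  (show (List.range m).Nodup from List.nodup_range).map (fun a b => by omega)

end Stmt14Aux

open Stmt14Aux

set_option maxHeartbeats 1000000

theorem stmt_14 (n k i j : ℕ) (hk : 1 ≤ k) (hkn : k + 1 ≤ n)
    (hi1 : 1 ≤ i) (hij : i < j) (hjk : j ≤ k)
    (d : ExtA →ₗ[ℂ] ExtA)
    (hleib : ∀ (v : Vsp) (y : ExtA),
      d (ExteriorAlgebra.ι ℂ v * y)
        = d (ExteriorAlgebra.ι ℂ v) * y - ExteriorAlgebra.ι ℂ v * d y)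
    (hclosed : ∀ l, 1 ≤ l → l ≤ k → d (φ l) = 0 ∧ d (φb l) = 0)
    (A : ℕ → ℕ → ℂ)
    (hstruct : d (φ (k + 1))
      = ∑ l ∈ Finset.Icc 1 k, ∑ m ∈ Finset.Icc (l + 1) k, A l m • (φ l * φ m))
    (hA : A i j ≠ 0) :
    ∃ ε : ℂ, (ε = 1 ∨ ε = -1) ∧
      d (((((idx k).filter (fun l => l ≠ i ∧ l ≠ j)) ++ [k + 1]).map φ).prod
          * ((idx k).map φb).prod)
        = (ε * A i j) • (((idx k).map φ).prod * ((idx k).map φb).prod) := by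
  classical
  set F : List ℕ := (idx k).filter (fun l => l ≠ i ∧ l ≠ j) with hF
  set vφ : ℕ → Vsp := fun l => Finsupp.single (Sum.inl l) 1 with hvφ
  set vφb : ℕ → Vsp := fun l => Finsupp.single (Sum.inr l) 1 with hvφb
  -- rewrite list prods as prodι
  have hφ : ∀ l, φ l = ExteriorAlgebra.ι ℂ (vφ l) := fun l => rfl
  have hφb : ∀ l, φb l = ExteriorAlgebra.ι ℂ (vφb l) := fun l => rfl
  have hmapφ : ∀ (X : List ℕ), (X.map φ).prod = prodι (X.map vφ) := by
    intro X
    induction X with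
    | nil => rfl
    | cons a X ih =>
      rw [List.map_cons, List.map_cons, List.prod_cons, prodι_cons, ih, hφ]
  have hmapφb : ∀ (X : List ℕ), (X.map φb).prod = prodι (X.map vφb) := by
    intro X
    induction X with
    | nil => rfl
    | cons a X ih =>
      rw [List.map_cons, List.map_cons, List.prod_cons, prodι_cons, ih, hφb]
  have hFsub : ∀ l ∈ F, l ∈ idx k := fun l hl => List.mem_of_mem_filter hl
  have hFclosed : ∀ v ∈ F.map vφ, d (ExteriorAlgebra.ι ℂ v) = 0 := by
    rintro v hv
    obtain ⟨l, hl, rfl⟩ := List.mem_map.mp hv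
    have := mem_idx.mp (hFsub l hl)
    exact (hclosed l this.1 this.2).1
  set Q : ExtA := ((idx k).map φb).prod with hQ
  have hQ0 : d Q = 0 := by
    rw [hQ, hmapφb]
    apply d_prodι_closed d hleib
    · have h1 : (1:ℕ) ∈ idx k := mem_idx.mpr ⟨le_refl 1, hk⟩
      intro h
      rw [List.map_eq_nil_iff] at h
      rw [h] at h1
      simp at h1
    · rintro v hv
      obtain ⟨l, hl, rfl⟩ := List.mem_map.mp hv
      have := mem_idx.mp hl
      exact (hclosed l this.1 this.2).2
  -- main: η = prodι (F.map vφ) * (φ (k+1) * Q)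
  have hη : (((F ++ [k + 1]).map φ).prod : ExtA) * Q
      = prodι (F.map vφ) * (φ (k+1) * Q) := by
    rw [List.map_append, List.prod_append, hmapφ, mul_assoc]
    simp
  have hd1 : d (φ (k+1) * Q) = d (φ (k+1)) * Q := by
    rw [hφ (k+1), hleib, ← hφ (k+1), hQ0, mul_zero, sub_zero]
  -- each term of the structure sum
  have hterm : ∀ l m : ℕ, prodι (F.map vφ) * ((φ l * φ m) * Q)
      = prodι ((F ++ [l, m]).map vφ) * Q := by
    intro l m
    rw [List.map_append, prodι_append, ← mul_assoc]
    simp [prodι, mul_assoc, hφ]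
  have hvanish : ∀ l m : ℕ, (l ∈ F ∨ m ∈ F) →
      prodι (F.map vφ) * ((φ l * φ m) * Q) = 0 := by
    intro l m hlm
    rw [hterm]
    have : ¬ ((F ++ [l, m]).map vφ).Nodup := by
      intro hnd
      have hnd' : (F ++ [l, m]).Nodup := hnd.of_map
      rw [List.nodup_append] at hnd'
      rcases hlm with h | h
      · exact hnd'.2.2 l h l (by simp) rfl
      · exact hnd'.2.2 m h m (by simp) rfl
    rw [prodι_eq_zero_of_not_nodup this, zero_mul]
  have hmemF : ∀ l, l ∈ F ↔ (1 ≤ l ∧ l ≤ k ∧ l ≠ i ∧ l ≠ j) := by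
    intro l
    rw [hF, List.mem_filter]
    simp [mem_idx, and_assoc]
  -- the sum collapses
  have hsum : prodι (F.map vφ) * (d (φ (k+1)) * Q)
      = A i j • (prodι (F.map vφ) * ((φ i * φ j) * Q)) := by
    rw [hstruct]
    rw [Finset.sum_mul, Finset.mul_sum]
    rw [Finset.sum_eq_single_of_mem i (Finset.mem_Icc.mpr ⟨hi1, by omega⟩)]
    · rw [Finset.sum_mul, Finset.mul_sum]
      rw [Finset.sum_eq_single_of_mem j (Finset.mem_Icc.mpr ⟨by omega, hjk⟩)]
      · rw [smul_mul_assoc, mul_smul_comm]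
      · intro m hm hmj
        have hm' := Finset.mem_Icc.mp hm
        rw [smul_mul_assoc, mul_smul_comm,
          hvanish i m (Or.inr ((hmemF m).mpr ⟨by omega, hm'.2, by omega, hmj⟩)),
          smul_zero]
    · intro l hl hli
      have hl' := Finset.mem_Icc.mp hl
      rw [Finset.sum_mul, Finset.mul_sum]
      apply Finset.sum_eq_zero
      intro m hm
      have hm' := Finset.mem_Icc.mp hm
      rw [smul_mul_assoc, mul_smul_comm]
      by_cases hlj : l = j
      · rw [hvanish l m (Or.inr ((hmemF m).mpr ⟨by omega, hm'.2, by omega, by omega⟩)),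
          smul_zero]
      · rw [hvanish l m (Or.inl ((hmemF l).mpr ⟨hl'.1, hl'.2, hli, hlj⟩)), smul_zero]
  -- the permutation
  have hperm : (F ++ [i, j]).Perm (idx k) := by
    have hFnd : F.Nodup := (nodup_idx k).filter _
    have hnd : (F ++ [i, j]).Nodup := by
      rw [List.nodup_append]
      refine ⟨hFnd, by simp [List.nodup_cons]; omega, ?_⟩
      intro a ha b hb hab; subst hab
      have := (hmemF a).mp ha
      simp at hb
      rcases hb with rfl | rfl
      · exact this.2.2.1 rfl
      · exact this.2.2.2 rfl
    rw [List.perm_ext_iff_of_nodup hnd (nodup_idx k)]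
    intro a
    simp only [List.mem_append, hmemF a, mem_idx]
    constructor
    · rintro (⟨h1, h2, _, _⟩ | h)
      · exact ⟨h1, h2⟩
      · simp at h
        rcases h with rfl | rfl
        · exact ⟨hi1, by omega⟩
        · exact ⟨by omega, hjk⟩
    · rintro ⟨h1, h2⟩
      by_cases hai : a = i
      · right; simp [hai]
      by_cases haj : a = j
      · right; simp [haj]
      · exact Or.inl ⟨h1, h2, hai, haj⟩
  have hvperm : ((F ++ [i, j]).map vφ).Perm ((idx k).map vφ) := hperm.map vφ
  obtain ⟨ε1, hε1, he1⟩ := prodι_perm hvperm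
  -- assemble
  have key := d_prodι_mul d hleib (F.map vφ) hFclosed (φ (k+1) * Q)
  have hεp : ((-1:ℂ) ^ (F.map vφ).length = 1 ∨ (-1:ℂ) ^ (F.map vφ).length = -1) := by
    rcases Nat.even_or_odd (F.map vφ).length with h | h
    · exact Or.inl (h.neg_one_pow)
    · exact Or.inr (h.neg_one_pow)
  refine ⟨(-1:ℂ) ^ (F.map vφ).length * ε1, ?_, ?_⟩
  · rcases hεp with h | h <;> rcases hε1 with rfl | rfl <;> rw [h] <;> simp
  · calc d ((((F ++ [k+1]).map φ).prod) * Q)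
        = d (prodι (F.map vφ) * (φ (k+1) * Q)) := by rw [hη]
      _ = ((-1 : ℂ) ^ (F.map vφ).length) • (prodι (F.map vφ) * d (φ (k+1) * Q)) := key
      _ = ((-1 : ℂ) ^ (F.map vφ).length) • (A i j • (prodι (F.map vφ) * ((φ i * φ j) * Q))) := by
          rw [hd1, ← mul_assoc, ← hsum, mul_assoc]
      _ = ((-1 : ℂ) ^ (F.map vφ).length * ε1 * A i j) • (((idx k).map φ).prod * Q) := by
          rw [hterm, he1, ← hmapφ, smul_mul_assoc, smul_smul, smul_smul]
          ring_nf
  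
end
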